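/- The vertices (extreme points) of the Birkhoff polytope of n × n doubly stochastic matrices are exactly the n × n permutation matrices. -/

import Mathlib

lemma eq_permMatrix_aux {n : ℕ} {σ : Equiv.Perm (Fin n)} {x : Matrix (Fin n) (Fin n) ℝ}
    (hx : x ∈ doublyStochastic ℝ (Fin n))
    (h0 : ∀ i j, σ.permMatrix ℝ i j = 0 → x i j = 0) :
    x = σ.permMatrix ℝ := by
  ext i j
  by_cases h : j = σ i
  · subst h
    have hrow := sum_row_of_mem_doublyStochastic hx i
    have : ∀ j ∈ Finset.univ, j ≠ σ i → x i j = 0 := by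
      intro j _ hj
      refine h0 i j ?_
      simp [Equiv.Perm.permMatrix, PEquiv.toMatrix_apply, Equiv.toPEquiv_apply, hj.symm]
    rw [Finset.sum_eq_single (σ i) (fun j hj hne => this j hj hne) (by simp)] at hrow
    simp [hrow, Equiv.Perm.permMatrix, PEquiv.toMatrix_apply, Equiv.toPEquiv_apply]
  · have : σ.permMatrix ℝ i j = 0 := by
      simp [Equiv.Perm.permMatrix, PEquiv.toMatrix_apply, Equiv.toPEquiv_apply,
        Ne.symm h]
    rw [this, h0 i j this]

/-- The extreme points of the Birkhoff polytope of `n × n` doubly stochastic matrices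
are exactly the permutation matrices. -/
theorem extremePoints_birkhoff (n : ℕ) :
    Set.extremePoints ℝ (doublyStochastic ℝ (Fin n) : Set (Matrix (Fin n) (Fin n) ℝ)) =
      {M : Matrix (Fin n) (Fin n) ℝ | ∃ σ : Equiv.Perm (Fin n), M = σ.permMatrix ℝ} := by
  apply Set.Subset.antisymm
  · intro M hM
    have := extremePoints_convexHull_subset
      (𝕜 := ℝ) (A := {M : Matrix (Fin n) (Fin n) ℝ | ∃ σ : Equiv.Perm (Fin n), M = σ.permMatrix ℝ})
    rw [doublyStochastic_eq_convexHull_permMatrix] at hM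
    apply this
    have hA : {x : Matrix (Fin n) (Fin n) ℝ | ∃ σ : Equiv.Perm (Fin n), σ.permMatrix ℝ = x} =
        {M : Matrix (Fin n) (Fin n) ℝ | ∃ σ : Equiv.Perm (Fin n), M = σ.permMatrix ℝ} := by
      ext x
      simp [eq_comm]
    rw [hA] at hM
    exact hM
  · rintro M ⟨σ, rfl⟩
    rw [mem_extremePoints]
    refine ⟨permMatrix_mem_doublyStochastic, ?_⟩
    intro x hx y hy hseg
    obtain ⟨a, b, ha, hb, hab, hsum⟩ := hseg
    have key : ∀ z ∈ doublyStochastic ℝ (Fin n), ∀ w ∈ doublyStochastic ℝ (Fin n),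
        ∀ c d : ℝ, 0 < c → 0 < d →
        c • z + d • w = σ.permMatrix ℝ → z = σ.permMatrix ℝ := by
      intro z hz w hw c d hc hd heq
      refine eq_permMatrix_aux hz fun i j h0 => ?_
      have h1 : c * z i j + d * w i j = 0 := by
        have := congrFun (congrFun heq i) j
        rw [h0] at this; simpa using this
      have hz0 : 0 ≤ z i j := nonneg_of_mem_doublyStochastic hz
      have hw0 : 0 ≤ w i j := nonneg_of_mem_doublyStochastic hw
      nlinarith
    constructor
    · exact key x hx y hy a b ha hb hsum
    · exact key y hy x hx b a hb ha (by rw [add_comm] at hsum; exact hsum)
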